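/- Let P be a transition matrix on 𝒳. For every α > 1: η̃^{(D_α)}(P) ≤ η̃^{(R_α)}(P) ≤ 1 and η^{(D_α)}(P) ≤ η^{(R_α)}(P) ≤ 1. For every β ∈ (0,1): η̃^{(R_β)}(P) ≤ η̃^{(D_β)}(P) and η^{(R_β)}(P) ≤ η^{(D_β)}(P). -/

import Mathlib

open Finset
open scoped ENNReal

/-- A transition matrix on a finite state space `X`: nonnegative entries, rows sum to one. -/
def IsTransMat {X : Type*} [Fintype X] (M : X → X → ℝ) : Prop :=
  (∀ x y, 0 ≤ M x y) ∧ ∀ x, ∑ y, M x y = 1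

/-- A probability mass function on a finite state space `X`. -/
def IsProb {X : Type*} [Fintype X] (μ : X → ℝ) : Prop :=
  (∀ x, 0 ≤ μ x) ∧ ∑ x, μ x = 1

/-- The inner sum of the extended-real-valued π-weighted α-divergence. -/
noncomputable def DalphaSumE {X : Type*} [Fintype X] (π : X → ℝ) (α : ℝ)
    (M L : X → X → ℝ) : ℝ≥0∞ :=
  ∑ x, ∑ y,
    if L x y = 0 then (if M x y = 0 then 0 else if 1 < α then ⊤ else 0)
    else ENNReal.ofReal (π x * L x y * (M x y / L x y) ^ α)

/-- The extended-real-valued π-weighted α-divergence. -/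
noncomputable def DalphaE {X : Type*} [Fintype X] (π : X → ℝ) (α : ℝ)
    (M L : X → X → ℝ) : EReal :=
  ((1 / (α - 1) : ℝ) : EReal) * ((DalphaSumE π α M L : EReal) - 1)

/-- The extended-real-valued π-weighted Rényi divergence. -/
noncomputable def RalphaE {X : Type*} [Fintype X] (π : X → ℝ) (α : ℝ)
    (M L : X → X → ℝ) : EReal :=
  if DalphaE π α M L = ⊤ then ⊤
  else (((1 / (α - 1)) * Real.log (1 + (α - 1) * (DalphaE π α M L).toReal) : ℝ) : EReal)

/-- The inner sum of the extended-real-valued α-divergence of probability measures. -/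
noncomputable def DtalphaSumE {X : Type*} [Fintype X] (α : ℝ) (μ ν : X → ℝ) : ℝ≥0∞ :=
  ∑ x,
    if ν x = 0 then (if μ x = 0 then 0 else if 1 < α then ⊤ else 0)
    else ENNReal.ofReal (ν x * (μ x / ν x) ^ α)

/-- The extended-real-valued α-divergence of probability measures. -/
noncomputable def DtalphaE {X : Type*} [Fintype X] (α : ℝ) (μ ν : X → ℝ) : EReal :=
  ((1 / (α - 1) : ℝ) : EReal) * ((DtalphaSumE α μ ν : EReal) - 1)

/-- The extended-real-valued Rényi divergence of probability measures. -/
noncomputable def RtalphaE {X : Type*} [Fintype X] (α : ℝ) (μ ν : X → ℝ) : EReal :=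
  if DtalphaE α μ ν = ⊤ then ⊤
  else (((1 / (α - 1)) * Real.log (1 + (α - 1) * (DtalphaE α μ ν).toReal) : ℝ) : EReal)

/-- Right action of a transition matrix on a transition matrix. -/
def matMul {X : Type*} [Fintype X] (M P : X → X → ℝ) : X → X → ℝ :=
  fun x y => ∑ z, M x z * P z y

/-- Right action of a transition matrix on a probability measure. -/
def vecMul {X : Type*} [Fintype X] (μ : X → ℝ) (P : X → X → ℝ) : X → ℝ :=
  fun y => ∑ x, μ x * P x y

/-- The α-divergence ergodicity coefficient on the space of transition matrices. -/
noncomputable def etaD {X : Type*} [Fintype X] (π : X → ℝ) (α : ℝ)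
    (P : X → X → ℝ) : EReal :=
  sSup {r : EReal | ∃ M L : X → X → ℝ, IsTransMat M ∧ IsTransMat L ∧ M ≠ L ∧
    0 < DalphaE π α M L ∧ DalphaE π α M L ≠ ⊤ ∧
    r = DalphaE π α (matMul M P) (matMul L P) *
      ((((DalphaE π α M L).toReal)⁻¹ : ℝ) : EReal)}

/-- The Rényi ergodicity coefficient on the space of transition matrices. -/
noncomputable def etaR {X : Type*} [Fintype X] (π : X → ℝ) (α : ℝ)
    (P : X → X → ℝ) : EReal :=
  sSup {r : EReal | ∃ M L : X → X → ℝ, IsTransMat M ∧ IsTransMat L ∧ M ≠ L ∧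
    0 < RalphaE π α M L ∧ RalphaE π α M L ≠ ⊤ ∧
    r = RalphaE π α (matMul M P) (matMul L P) *
      ((((RalphaE π α M L).toReal)⁻¹ : ℝ) : EReal)}

/-- The α-divergence ergodicity coefficient on the space of probability measures. -/
noncomputable def etaTD {X : Type*} [Fintype X] (α : ℝ) (P : X → X → ℝ) : EReal :=
  sSup {r : EReal | ∃ μ ν : X → ℝ, IsProb μ ∧ IsProb ν ∧ μ ≠ ν ∧
    0 < DtalphaE α μ ν ∧ DtalphaE α μ ν ≠ ⊤ ∧
    r = DtalphaE α (vecMul μ P) (vecMul ν P) *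
      ((((DtalphaE α μ ν).toReal)⁻¹ : ℝ) : EReal)}

/-- The Rényi ergodicity coefficient on the space of probability measures. -/
noncomputable def etaTR {X : Type*} [Fintype X] (α : ℝ) (P : X → X → ℝ) : EReal :=
  sSup {r : EReal | ∃ μ ν : X → ℝ, IsProb μ ∧ IsProb ν ∧ μ ≠ ν ∧
    0 < RtalphaE α μ ν ∧ RtalphaE α μ ν ≠ ⊤ ∧
    r = RtalphaE α (vecMul μ P) (vecMul ν P) *
      ((((RtalphaE α μ ν).toReal)⁻¹ : ℝ) : EReal)}

section Stmt13Aux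

variable {X : Type*} [Fintype X]

/-- auxiliary pointwise divergence term -/
noncomputable def gd (α m n : ℝ) : ℝ := if n = 0 then 0 else n * (m / n) ^ α

lemma gd_nonneg {α m n : ℝ} (hm : 0 ≤ m) (hn : 0 ≤ n) : 0 ≤ gd α m n := by
  unfold gd
  split
  · exact le_refl 0
  · exact mul_nonneg hn (Real.rpow_nonneg (div_nonneg hm hn) α)

lemma gd_scale {α m n c : ℝ} (hc : 0 ≤ c) : gd α (c * m) (c * n) = c * gd α m n := by
  rcases eq_or_lt_of_le hc with rfl | hc
  · simp [gd]
  · unfold gd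
    rcases eq_or_ne n 0 with rfl | hn
    · simp
    · rw [if_neg (mul_ne_zero hc.ne' hn), if_neg hn, mul_div_mul_left _ _ hc.ne']
      ring

lemma gd_one (α : ℝ) : gd α 1 1 = 1 := by simp [gd]

lemma jensen_convex {α : ℝ} (hα : 1 ≤ α) {a b : X → ℝ}
    (ha : ∀ x, 0 ≤ a x) (hb : ∀ x, 0 ≤ b x) (hs : ∀ x, b x = 0 → a x = 0) :
    gd α (∑ x, a x) (∑ x, b x) ≤ ∑ x, gd α (a x) (b x) := by
  have hB0 : 0 ≤ ∑ x, b x := sum_nonneg fun x _ => hb x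
  rcases eq_or_lt_of_le hB0 with h0 | hBpos
  · have h1 : gd α (∑ x, a x) (∑ x, b x) = 0 := by rw [← h0]; simp [gd]
    rw [h1]
    exact sum_nonneg fun x _ => gd_nonneg (ha x) (hb x)
  · set B := ∑ x, b x with hB
    set w : X → ℝ := fun x => b x / B with hw_def
    set t : X → ℝ := fun x => if b x = 0 then 0 else a x / b x with ht_def
    have hw : ∀ x, 0 ≤ w x := fun x => div_nonneg (hb x) hB0
    have hw1 : ∑ x, w x = 1 := by rw [hw_def, ← sum_div]; exact div_self hBpos.ne'
    have ht : ∀ x, 0 ≤ t x := fun x => by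
      rw [ht_def]; dsimp only; split
      · exact le_refl 0
      · exact div_nonneg (ha x) (hb x)
    have hwt : ∀ x, w x * t x = a x / B := by
      intro x
      rw [hw_def, ht_def]; dsimp only
      rcases eq_or_ne (b x) 0 with h | h
      · simp [h, hs x h]
      · rw [if_neg h]; field_simp
    have hterm : ∀ x, w x * t x ^ α = gd α (a x) (b x) / B := by
      intro x
      rw [hw_def, ht_def]; dsimp only
      rcases eq_or_ne (b x) 0 with h | h
      · simp [h, gd, Real.zero_rpow (by linarith : α ≠ 0)]
      · rw [if_neg h, gd, if_neg h]; ring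
    have key := Real.rpow_arith_mean_le_arith_mean_rpow univ w t
      (fun i _ => hw i) hw1 (fun i _ => ht i) hα
    have hsum_wt : ∑ x, w x * t x = (∑ x, a x) / B := by
      simp_rw [hwt]; rw [sum_div]
    rw [hsum_wt] at key
    simp_rw [hterm] at key
    rw [← sum_div] at key
    have hgd : gd α (∑ x, a x) B = B * ((∑ x, a x) / B) ^ α := by
      rw [gd, if_neg hBpos.ne']
    rw [hgd]
    calc B * ((∑ x, a x) / B) ^ α ≤ B * ((∑ x, gd α (a x) (b x)) / B) :=
          mul_le_mul_of_nonneg_left key hB0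
      _ = ∑ x, gd α (a x) (b x) := by field_simp

lemma jensen_concave {β : ℝ} (hβ0 : 0 < β) (hβ1 : β ≤ 1) {a b : X → ℝ}
    (ha : ∀ x, 0 ≤ a x) (hb : ∀ x, 0 ≤ b x) :
    ∑ x, gd β (a x) (b x) ≤ gd β (∑ x, a x) (∑ x, b x) := by
  have hB0 : 0 ≤ ∑ x, b x := sum_nonneg fun x _ => hb x
  rcases eq_or_lt_of_le hB0 with h0 | hBpos
  · have hbz : ∀ x, b x = 0 := fun x =>
      (sum_eq_zero_iff_of_nonneg (fun x _ => hb x)).1 h0.symm x (mem_univ x)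
    have h1 : ∑ x, gd β (a x) (b x) = 0 := by
      refine sum_eq_zero fun x _ => ?_; simp [gd, hbz x]
    rw [h1, ← h0]; simp [gd]
  · set B := ∑ x, b x with hB
    set w : X → ℝ := fun x => b x / B with hw_def
    set t : X → ℝ := fun x => if b x = 0 then 0 else a x / b x with ht_def
    have hw : ∀ x, 0 ≤ w x := fun x => div_nonneg (hb x) hB0
    have hw1 : ∑ x, w x = 1 := by rw [hw_def, ← sum_div]; exact div_self hBpos.ne'
    have ht : ∀ x, 0 ≤ t x := fun x => by
      rw [ht_def]; dsimp only; split
      · exact le_refl 0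
      · exact div_nonneg (ha x) (hb x)
    have hterm : ∀ x, w x * t x ^ β = gd β (a x) (b x) / B := by
      intro x
      rw [hw_def, ht_def]; dsimp only
      rcases eq_or_ne (b x) 0 with h | h
      · simp [h, gd, Real.zero_rpow hβ0.ne']
      · rw [if_neg h, gd, if_neg h]; ring
    have hp : (1:ℝ) ≤ 1 / β := by rw [le_div_iff₀ hβ0]; linarith
    have key := Real.arith_mean_le_rpow_mean univ w (fun x => t x ^ β)
      (fun i _ => hw i) hw1 (fun i _ => Real.rpow_nonneg (ht i) β) hp
    have hrw : ∀ x, (t x ^ β) ^ ((1:ℝ)/β) = t x := by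
      intro x
      rw [← Real.rpow_mul (ht x), mul_one_div_cancel hβ0.ne', Real.rpow_one]
    simp only [hrw, one_div_one_div] at key
    -- key : ∑ x, w x * t x ^ β ≤ (∑ x, w x * t x) ^ β
    have hwt_le : ∀ x, w x * t x ≤ a x / B := by
      intro x
      rw [hw_def, ht_def]; dsimp only
      rcases eq_or_ne (b x) 0 with h | h
      · simp [h]
        exact div_nonneg (ha x) hB0
      · rw [if_neg h]; rw [div_mul_div_comm, mul_comm (b x), mul_div_mul_right _ _ h]
    have hsum_le : ∑ x, w x * t x ≤ (∑ x, a x) / B := by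
      rw [sum_div]; exact sum_le_sum fun x _ => hwt_le x
    have hsum_nn : 0 ≤ ∑ x, w x * t x := sum_nonneg fun x _ => mul_nonneg (hw x) (ht x)
    have key2 : (∑ x, w x * t x) ^ β ≤ ((∑ x, a x) / B) ^ β :=
      Real.rpow_le_rpow hsum_nn hsum_le hβ0.le
    have hgd : gd β (∑ x, a x) B = B * ((∑ x, a x) / B) ^ β := by
      rw [gd, if_neg hBpos.ne']
    have hsum_gd : ∑ x, gd β (a x) (b x) = B * ∑ x, w x * t x ^ β := by
      simp_rw [hterm]
      rw [← sum_div]; field_simp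
    rw [hgd, hsum_gd]
    exact mul_le_mul_of_nonneg_left (le_trans key key2) hB0

lemma dpi_convex {α : ℝ} (hα : 1 ≤ α) {m n : X → ℝ}
    (hm : ∀ x, 0 ≤ m x) (hn : ∀ x, 0 ≤ n x) (hs : ∀ x, n x = 0 → m x = 0)
    {P : X → X → ℝ} (hP : IsTransMat P) :
    ∑ y, gd α (vecMul m P y) (vecMul n P y) ≤ ∑ x, gd α (m x) (n x) := by
  have step1 : ∀ y, gd α (vecMul m P y) (vecMul n P y) ≤
      ∑ x, gd α (m x * P x y) (n x * P x y) := by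
    intro y
    refine jensen_convex hα (fun x => mul_nonneg (hm x) (hP.1 x y))
      (fun x => mul_nonneg (hn x) (hP.1 x y)) (fun x h => ?_)
    rcases mul_eq_zero.1 h with h | h
    · rw [hs x h, zero_mul]
    · rw [h, mul_zero]
  calc ∑ y, gd α (vecMul m P y) (vecMul n P y)
      ≤ ∑ y, ∑ x, gd α (m x * P x y) (n x * P x y) := sum_le_sum fun y _ => step1 y
    _ = ∑ x, ∑ y, P x y * gd α (m x) (n x) := by
        rw [Finset.sum_comm]
        refine sum_congr rfl fun x _ => sum_congr rfl fun y _ => ?_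
        rw [mul_comm (m x), mul_comm (n x), gd_scale (hP.1 x y)]
    _ = ∑ x, gd α (m x) (n x) := by
        refine sum_congr rfl fun x _ => ?_
        rw [← sum_mul, hP.2 x, one_mul]

lemma dpi_concave {β : ℝ} (hβ0 : 0 < β) (hβ1 : β ≤ 1) {m n : X → ℝ}
    (hm : ∀ x, 0 ≤ m x) (hn : ∀ x, 0 ≤ n x)
    {P : X → X → ℝ} (hP : IsTransMat P) :
    ∑ x, gd β (m x) (n x) ≤ ∑ y, gd β (vecMul m P y) (vecMul n P y) := by
  have step1 : ∀ y, ∑ x, gd β (m x * P x y) (n x * P x y) ≤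
      gd β (vecMul m P y) (vecMul n P y) :=
    fun y => jensen_concave hβ0 hβ1 (fun x => mul_nonneg (hm x) (hP.1 x y))
      (fun x => mul_nonneg (hn x) (hP.1 x y))
  calc ∑ x, gd β (m x) (n x)
      = ∑ x, ∑ y, P x y * gd β (m x) (n x) := by
        refine sum_congr rfl fun x _ => ?_
        rw [← sum_mul, hP.2 x, one_mul]
    _ = ∑ y, ∑ x, gd β (m x * P x y) (n x * P x y) := by
        rw [Finset.sum_comm]
        refine sum_congr rfl fun y _ => sum_congr rfl fun x _ => ?_
        rw [mul_comm (m x), mul_comm (n x), gd_scale (hP.1 x y)]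
    _ ≤ ∑ y, gd β (vecMul m P y) (vecMul n P y) := sum_le_sum fun y _ => step1 y

lemma log_key {s t : ℝ} (hs : 0 < s) (ht0 : 0 ≤ t) (ht1 : t ≤ 1) :
    t * Real.log s ≤ Real.log (t * s + (1 - t)) := by
  have h := Real.geom_mean_le_arith_mean2_weighted (w₁ := t) (w₂ := 1 - t) (p₁ := s)
    (p₂ := 1) ht0 (by linarith) hs.le zero_le_one (by ring)
  rw [Real.one_rpow, mul_one, mul_one] at h
  calc t * Real.log s = Real.log (s ^ t) := (Real.log_rpow hs t).symm
    _ ≤ _ := Real.log_le_log (Real.rpow_pos_of_pos hs t) h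

lemma ratioA {u v : ℝ} (hu : 0 ≤ u) (huv : u ≤ v) (hv : 0 < v) :
    u / v ≤ Real.log (1 + u) / Real.log (1 + v) ∧
      Real.log (1 + u) / Real.log (1 + v) ≤ 1 := by
  have hlv : 0 < Real.log (1 + v) := Real.log_pos (by linarith)
  have hk := log_key (show (0:ℝ) < 1 + v by linarith) (div_nonneg hu hv.le)
    ((div_le_one hv).2 huv)
  have harg : u / v * (1 + v) + (1 - u / v) = 1 + u := by field_simp; ring
  rw [harg] at hk
  constructor
  · exact (le_div_iff₀ hlv).2 hk
  · rw [div_le_one hlv]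
    exact Real.log_le_log (by linarith) (by linarith)

lemma ratioB {u v : ℝ} (hu : 0 ≤ u) (huv : u ≤ v) (hv0 : 0 < v) (hv1 : v < 1) :
    Real.log (1 - u) / Real.log (1 - v) ≤ u / v := by
  have hlv : Real.log (1 - v) < 0 := Real.log_neg (by linarith) (by linarith)
  have hk := log_key (show (0:ℝ) < 1 - v by linarith) (div_nonneg hu hv0.le)
    ((div_le_one hv0).2 huv)
  have harg : u / v * (1 - v) + (1 - u / v) = 1 - u := by field_simp; ring
  rw [harg] at hk
  exact (div_le_iff_of_neg hlv).2 hk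

end Stmt13Aux

section Stmt13Aux2

variable {X : Type*} [Fintype X]

/-- real-valued inner sum -/
noncomputable def St (α : ℝ) (μ ν : X → ℝ) : ℝ := ∑ x, gd α (μ x) (ν x)

lemma St_nonneg {α : ℝ} {μ ν : X → ℝ} (hμ : ∀ x, 0 ≤ μ x) (hν : ∀ x, 0 ≤ ν x) :
    0 ≤ St α μ ν :=
  sum_nonneg fun x _ => gd_nonneg (hμ x) (hν x)

lemma sumE_eq {α : ℝ} {μ ν : X → ℝ} (hμ : ∀ x, 0 ≤ μ x) (hν : ∀ x, 0 ≤ ν x)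
    (hok : ∀ x, ν x = 0 → μ x = 0 ∨ ¬ 1 < α) :
    DtalphaSumE α μ ν = ENNReal.ofReal (St α μ ν) := by
  rw [St, ENNReal.ofReal_sum_of_nonneg (fun i _ => gd_nonneg (hμ i) (hν i))]
  rw [DtalphaSumE]
  refine Finset.sum_congr rfl fun x _ => ?_
  rcases eq_or_ne (ν x) 0 with h | h
  · rw [if_pos h]
    rcases eq_or_ne (μ x) 0 with h2 | h2
    · simp [gd, h, h2]
    · rcases hok x h with h3 | h3
      · exact absurd h3 h2
      · rw [if_neg h2, if_neg h3]
        simp [gd, h]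
  · rw [if_neg h, gd, if_neg h]

lemma DtE_eq {α : ℝ} {μ ν : X → ℝ} (hμ : ∀ x, 0 ≤ μ x) (hν : ∀ x, 0 ≤ ν x)
    (hok : ∀ x, ν x = 0 → μ x = 0 ∨ ¬ 1 < α) :
    DtalphaE α μ ν = (((1 / (α - 1)) * (St α μ ν - 1) : ℝ) : EReal) := by
  rw [DtalphaE, sumE_eq hμ hν hok, EReal.coe_ennreal_ofReal,
    max_eq_left (St_nonneg hμ hν), ← EReal.coe_one, ← EReal.coe_sub, ← EReal.coe_mul]

lemma supp_of_ne_top {α : ℝ} (hα : 1 < α) {μ ν : X → ℝ} (h : DtalphaE α μ ν ≠ ⊤) :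
    ∀ x, ν x = 0 → μ x = 0 := by
  intro x hx
  by_contra hμx
  apply h
  have hsum : DtalphaSumE α μ ν = ⊤ := by
    rw [DtalphaSumE, ENNReal.sum_eq_top]
    exact ⟨x, mem_univ x, by rw [if_pos hx, if_neg hμx, if_pos hα]⟩
  rw [DtalphaE, hsum, EReal.coe_ennreal_top, ← EReal.coe_one, EReal.top_sub_coe]
  exact EReal.coe_mul_top_of_pos (one_div_pos.2 (by linarith))

lemma Rt_eq {α : ℝ} (hα1 : α ≠ 1) {μ ν : X → ℝ}
    (hD : DtalphaE α μ ν = (((1 / (α - 1)) * (St α μ ν - 1) : ℝ) : EReal)) :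
    RtalphaE α μ ν = (((1 / (α - 1)) * Real.log (St α μ ν) : ℝ) : EReal) := by
  have hne : α - 1 ≠ 0 := sub_ne_zero.2 hα1
  rw [RtalphaE, hD, if_neg (EReal.coe_ne_top _), EReal.toReal_coe]
  have : 1 + (α - 1) * (1 / (α - 1) * (St α μ ν - 1)) = St α μ ν := by
    field_simp; ring
  rw [this]

lemma vecMul_prob {μ : X → ℝ} {P : X → X → ℝ} (hμ : IsProb μ) (hP : IsTransMat P) :
    IsProb (vecMul μ P) := by
  constructor
  · intro y
    exact sum_nonneg fun x _ => mul_nonneg (hμ.1 x) (hP.1 x y)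
  · calc ∑ y, vecMul μ P y = ∑ x, ∑ y, μ x * P x y := Finset.sum_comm
      _ = ∑ x, μ x * ∑ y, P x y := by simp_rw [Finset.mul_sum]
      _ = 1 := by simp_rw [hP.2]; simpa using hμ.2

lemma vecMul_supp {μ ν : X → ℝ} {P : X → X → ℝ} (hν : ∀ x, 0 ≤ ν x)
    (hP : IsTransMat P) (hs : ∀ x, ν x = 0 → μ x = 0) :
    ∀ y, vecMul ν P y = 0 → vecMul μ P y = 0 := by
  intro y hy
  have hz : ∀ x, ν x * P x y = 0 := fun x =>
    (sum_eq_zero_iff_of_nonneg (fun x _ => mul_nonneg (hν x) (hP.1 x y))).1 hy x (mem_univ x)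
  refine sum_eq_zero fun x _ => ?_
  rcases mul_eq_zero.1 (hz x) with h | h
  · rw [hs x h, zero_mul]
  · rw [h, mul_zero]

lemma St_ge_one {α : ℝ} (hα : 1 ≤ α) {μ ν : X → ℝ} (hμ : IsProb μ) (hν : IsProb ν)
    (hs : ∀ x, ν x = 0 → μ x = 0) : 1 ≤ St α μ ν := by
  have h := jensen_convex hα hμ.1 hν.1 hs
  rwa [hμ.2, hν.2, gd_one] at h

lemma St_le_one {β : ℝ} (hβ0 : 0 < β) (hβ1 : β ≤ 1) {μ ν : X → ℝ}
    (hμ : IsProb μ) (hν : IsProb ν) : St β μ ν ≤ 1 := by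
  have h := jensen_concave hβ0 hβ1 hμ.1 hν.1
  rwa [hμ.2, hν.2, gd_one] at h

lemma RtoD {α : ℝ} (hα : 1 < α) {μ ν : X → ℝ} (hμ : IsProb μ) (hν : IsProb ν)
    (hR0 : 0 < RtalphaE α μ ν) (hRt : RtalphaE α μ ν ≠ ⊤) :
    0 < DtalphaE α μ ν ∧ DtalphaE α μ ν ≠ ⊤ := by
  have hDt : DtalphaE α μ ν ≠ ⊤ := by
    intro h; exact hRt (by rw [RtalphaE, if_pos h])
  have hc : (0:ℝ) < 1 / (α - 1) := one_div_pos.2 (by linarith)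
  have hs := supp_of_ne_top hα hDt
  have hDb := DtE_eq (α := α) hμ.1 hν.1 (fun x h => Or.inl (hs x h))
  have hRb := Rt_eq (ne_of_gt hα) hDb
  rw [hRb] at hR0
  have hpos : 0 < 1 / (α - 1) * Real.log (St α μ ν) := EReal.coe_pos.1 hR0
  have hlb : 0 < Real.log (St α μ ν) := by
    by_contra h
    push_neg at h
    nlinarith
  have hSb1 : 1 < St α μ ν := by
    by_contra h
    push_neg at h
    have := Real.log_nonpos (St_nonneg hμ.1 hν.1) h
    linarith
  refine ⟨?_, hDt⟩
  rw [hDb]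
  exact EReal.coe_pos.2 (mul_pos hc (by linarith))

lemma mainA {α : ℝ} (hα : 1 < α) {P : X → X → ℝ} (hP : IsTransMat P)
    {μ ν : X → ℝ} (hμ : IsProb μ) (hν : IsProb ν)
    (hD0 : 0 < DtalphaE α μ ν) (hDt : DtalphaE α μ ν ≠ ⊤) :
    0 < RtalphaE α μ ν ∧ RtalphaE α μ ν ≠ ⊤ ∧
    DtalphaE α (vecMul μ P) (vecMul ν P) * (((DtalphaE α μ ν).toReal)⁻¹ : ℝ) ≤
      RtalphaE α (vecMul μ P) (vecMul ν P) * (((RtalphaE α μ ν).toReal)⁻¹ : ℝ) ∧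
    RtalphaE α (vecMul μ P) (vecMul ν P) * (((RtalphaE α μ ν).toReal)⁻¹ : ℝ) ≤ 1 := by
  have hc : (0:ℝ) < 1 / (α - 1) := one_div_pos.2 (by linarith)
  have hcne : (1:ℝ) / (α - 1) ≠ 0 := hc.ne'
  have hs := supp_of_ne_top hα hDt
  have hok : ∀ x, ν x = 0 → μ x = 0 ∨ ¬ 1 < α := fun x h => Or.inl (hs x h)
  have hμP := vecMul_prob hμ hP
  have hνP := vecMul_prob hν hP
  have hs' := vecMul_supp hν.1 hP hs
  have hok' : ∀ y, vecMul ν P y = 0 → vecMul μ P y = 0 ∨ ¬ 1 < α :=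
    fun y h => Or.inl (hs' y h)
  have hDb := DtE_eq hμ.1 hν.1 hok
  have hDa := DtE_eq hμP.1 hνP.1 hok'
  have hRb := Rt_eq (ne_of_gt hα) hDb
  have hRa := Rt_eq (ne_of_gt hα) hDa
  set Sb := St α μ ν
  set Sa := St α (vecMul μ P) (vecMul ν P)
  have hSb1 : 1 < Sb := by
    rw [hDb] at hD0
    have := EReal.coe_pos.1 hD0
    nlinarith
  have hSa1 : 1 ≤ Sa := St_ge_one hα.le hμP hνP hs'
  have hSab : Sa ≤ Sb := dpi_convex hα.le hμ.1 hν.1 hs hP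
  have hlb : 0 < Real.log Sb := Real.log_pos hSb1
  have hrA := ratioA (u := Sa - 1) (v := Sb - 1) (by linarith) (by linarith) (by linarith)
  rw [show (1:ℝ) + (Sa - 1) = Sa by ring, show (1:ℝ) + (Sb - 1) = Sb by ring] at hrA
  have e1 : 1 / (α - 1) * (Sa - 1) * (1 / (α - 1) * (Sb - 1))⁻¹ = (Sa - 1) / (Sb - 1) := by
    rw [mul_inv, mul_mul_mul_comm, mul_inv_cancel₀ hcne, one_mul, div_eq_mul_inv]
  have e2 : 1 / (α - 1) * Real.log Sa * (1 / (α - 1) * Real.log Sb)⁻¹ =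
      Real.log Sa / Real.log Sb := by
    rw [mul_inv, mul_mul_mul_comm, mul_inv_cancel₀ hcne, one_mul, div_eq_mul_inv]
  refine ⟨?_, ?_, ?_, ?_⟩
  · rw [hRb]; exact EReal.coe_pos.2 (mul_pos hc hlb)
  · rw [hRb]; exact EReal.coe_ne_top _
  · rw [hDa, hDb, hRa, hRb, EReal.toReal_coe, EReal.toReal_coe,
      ← EReal.coe_mul, ← EReal.coe_mul, EReal.coe_le_coe_iff, e1, e2]
    exact hrA.1
  · rw [hRa, hRb, EReal.toReal_coe, ← EReal.coe_mul, ← EReal.coe_one,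
      EReal.coe_le_coe_iff, e2]
    exact hrA.2

lemma mainB {β : ℝ} (hβ0 : 0 < β) (hβ1 : β < 1) {P : X → X → ℝ} (hP : IsTransMat P)
    {μ ν : X → ℝ} (hμ : IsProb μ) (hν : IsProb ν)
    (hR0 : 0 < RtalphaE β μ ν) :
    0 < DtalphaE β μ ν ∧ DtalphaE β μ ν ≠ ⊤ ∧
    RtalphaE β (vecMul μ P) (vecMul ν P) * (((RtalphaE β μ ν).toReal)⁻¹ : ℝ) ≤
      DtalphaE β (vecMul μ P) (vecMul ν P) * (((DtalphaE β μ ν).toReal)⁻¹ : ℝ) := by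
  have hc : (1:ℝ) / (β - 1) < 0 := div_neg_of_pos_of_neg one_pos (by linarith)
  have hcne : (1:ℝ) / (β - 1) ≠ 0 := hc.ne
  have hok : ∀ x, ν x = 0 → μ x = 0 ∨ ¬ 1 < β := fun x _ => Or.inr (by linarith)
  have hμP := vecMul_prob hμ hP
  have hνP := vecMul_prob hν hP
  have hok' : ∀ y, vecMul ν P y = 0 → vecMul μ P y = 0 ∨ ¬ 1 < β :=
    fun y _ => Or.inr (by linarith)
  have hDb := DtE_eq hμ.1 hν.1 hok
  have hDa := DtE_eq hμP.1 hνP.1 hok'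
  have hRb := Rt_eq (ne_of_lt hβ1) hDb
  have hRa := Rt_eq (ne_of_lt hβ1) hDa
  set Sb := St β μ ν
  set Sa := St β (vecMul μ P) (vecMul ν P)
  rw [hRb] at hR0
  have hpos : 0 < 1 / (β - 1) * Real.log Sb := EReal.coe_pos.1 hR0
  have hlb : Real.log Sb < 0 := by
    by_contra h
    push_neg at h
    nlinarith
  have hSbpos : 0 < Sb := by
    have h0 : (0:ℝ) ≤ Sb := St_nonneg hμ.1 hν.1
    rcases eq_or_lt_of_le h0 with h | h
    · rw [← h, Real.log_zero] at hlb; linarith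
    · exact h
  have hSb1 : Sb < 1 := (Real.log_neg_iff hSbpos).1 hlb
  have hSa_le : Sa ≤ 1 := St_le_one hβ0 hβ1.le hμP hνP
  have hSba : Sb ≤ Sa := dpi_concave hβ0 hβ1.le hμ.1 hν.1 hP
  have hrB := ratioB (u := 1 - Sa) (v := 1 - Sb) (by linarith) (by linarith)
    (by linarith) (by linarith)
  rw [show (1:ℝ) - (1 - Sa) = Sa by ring, show (1:ℝ) - (1 - Sb) = Sb by ring] at hrB
  have e1 : 1 / (β - 1) * (Sa - 1) * (1 / (β - 1) * (Sb - 1))⁻¹ = (Sa - 1) / (Sb - 1) := by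
    rw [mul_inv, mul_mul_mul_comm, mul_inv_cancel₀ hcne, one_mul, div_eq_mul_inv]
  have e2 : 1 / (β - 1) * Real.log Sa * (1 / (β - 1) * Real.log Sb)⁻¹ =
      Real.log Sa / Real.log Sb := by
    rw [mul_inv, mul_mul_mul_comm, mul_inv_cancel₀ hcne, one_mul, div_eq_mul_inv]
  have hfrac : (Sa - 1) / (Sb - 1) = (1 - Sa) / (1 - Sb) := by
    rw [show Sa - 1 = -(1 - Sa) by ring, show Sb - 1 = -(1 - Sb) by ring, neg_div_neg_eq]
  refine ⟨?_, ?_, ?_⟩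
  · rw [hDb]
    exact EReal.coe_pos.2 (mul_pos_of_neg_of_neg hc (by linarith))
  · rw [hDb]; exact EReal.coe_ne_top _
  · rw [hDa, hDb, hRa, hRb, EReal.toReal_coe, EReal.toReal_coe,
      ← EReal.coe_mul, ← EReal.coe_mul, EReal.coe_le_coe_iff, e1, e2, hfrac]
    exact hrB

end Stmt13Aux2

section Stmt13Bridge

variable {X : Type*} [Fintype X] [DecidableEq X]

/-- lift a π-weighted matrix to a measure on the product space -/
def liftMat (π : X → ℝ) (M : X → X → ℝ) : X × X → ℝ := fun p => π p.1 * M p.1 p.2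

/-- lift a transition matrix to the product space -/
def liftP (P : X → X → ℝ) : X × X → X × X → ℝ :=
  fun p q => if q.1 = p.1 then P p.2 q.2 else 0

lemma liftP_trans {P : X → X → ℝ} (hP : IsTransMat P) : IsTransMat (liftP P) := by
  constructor
  · intro p q
    unfold liftP
    split
    · exact hP.1 _ _
    · exact le_refl 0
  · intro p
    rw [Fintype.sum_prod_type]
    unfold liftP
    rw [Finset.sum_eq_single p.1]
    · simp [hP.2 p.2]
    · intro b _ hb
      simp [hb]
    · intro h
      exact absurd (mem_univ p.1) h

lemma liftMat_prob {π : X → ℝ} (hπ : ∀ x, 0 < π x) (hπ1 : ∑ x, π x = 1)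
    {M : X → X → ℝ} (hM : IsTransMat M) : IsProb (liftMat π M) := by
  constructor
  · intro p
    exact mul_nonneg (hπ p.1).le (hM.1 _ _)
  · rw [Fintype.sum_prod_type]
    unfold liftMat
    calc ∑ x, ∑ y, π x * M x y = ∑ x, π x * ∑ y, M x y := by simp_rw [Finset.mul_sum]
      _ = 1 := by simp_rw [hM.2]; simpa using hπ1

lemma liftMat_vecMul (π : X → ℝ) (M P : X → X → ℝ) :
    liftMat π (matMul M P) = vecMul (liftMat π M) (liftP P) := by
  funext p
  show π p.1 * (∑ z, M p.1 z * P z p.2) =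
    ∑ q : X × X, π q.1 * M q.1 q.2 * (if p.1 = q.1 then P q.2 p.2 else 0)
  rw [Fintype.sum_prod_type]
  have h1 : ∀ x, ∑ z, π x * M x z * (if p.1 = x then P z p.2 else 0)
      = if p.1 = x then ∑ z, π p.1 * M p.1 z * P z p.2 else 0 := by
    intro x
    rcases eq_or_ne p.1 x with h | h
    · subst h; simp
    · simp [h]
  simp_rw [h1]
  rw [Finset.sum_ite_eq, if_pos (mem_univ p.1), Finset.mul_sum]
  exact Finset.sum_congr rfl fun z _ => by ring

lemma bridgeSum {π : X → ℝ} (hπ : ∀ x, 0 < π x) (α : ℝ) (M L : X → X → ℝ) :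
    DalphaSumE π α M L = DtalphaSumE α (liftMat π M) (liftMat π L) := by
  rw [DalphaSumE, DtalphaSumE, Fintype.sum_prod_type]
  refine Finset.sum_congr rfl fun x _ => Finset.sum_congr rfl fun y _ => ?_
  have hπx : π x ≠ 0 := (hπ x).ne'
  simp only [liftMat]
  show (if L x y = 0 then (if M x y = 0 then 0 else if 1 < α then ⊤ else 0)
      else ENNReal.ofReal (π x * L x y * (M x y / L x y) ^ α)) =
    (if π x * L x y = 0 then (if π x * M x y = 0 then 0 else if 1 < α then ⊤ else 0)
      else ENNReal.ofReal (π x * L x y * (π x * M x y / (π x * L x y)) ^ α))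
  rcases eq_or_ne (L x y) 0 with h | h
  · rw [if_pos (show π x * L x y = 0 by rw [h, mul_zero]), if_pos h]
    rcases eq_or_ne (M x y) 0 with h2 | h2
    · rw [if_pos h2, if_pos (show π x * M x y = 0 by rw [h2, mul_zero])]
    · rw [if_neg h2, if_neg (mul_ne_zero hπx h2)]
  · rw [if_neg (mul_ne_zero hπx h), if_neg h]
    congr 1
    rw [mul_div_mul_left _ _ hπx]

lemma bridgeD {π : X → ℝ} (hπ : ∀ x, 0 < π x) (α : ℝ) (M L : X → X → ℝ) :
    DalphaE π α M L = DtalphaE α (liftMat π M) (liftMat π L) := by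
  rw [DalphaE, DtalphaE, bridgeSum hπ]

lemma bridgeR {π : X → ℝ} (hπ : ∀ x, 0 < π x) (α : ℝ) (M L : X → X → ℝ) :
    RalphaE π α M L = RtalphaE α (liftMat π M) (liftMat π L) := by
  rw [RalphaE, RtalphaE, bridgeD hπ]

end Stmt13Bridge

/-- Bounds among the α-divergence and Rényi ergodicity coefficients. -/
theorem stmt13 {X : Type*} [Fintype X] [Nonempty X]
    (π : X → ℝ) (hπ : ∀ x, 0 < π x) (hπ1 : ∑ x, π x = 1)
    (P : X → X → ℝ) (hP : IsTransMat P) :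
    (∀ α : ℝ, 1 < α →
      etaTD α P ≤ etaTR α P ∧ etaTR α P ≤ (1 : EReal) ∧
      etaD π α P ≤ etaR π α P ∧ etaR π α P ≤ (1 : EReal)) ∧
    (∀ β : ℝ, β ∈ Set.Ioo (0 : ℝ) 1 →
      etaTR β P ≤ etaTD β P ∧ etaR π β P ≤ etaD π β P) := by
  classical
  have hP' := liftP_trans (X := X) hP
  constructor
  · intro α hα
    refine ⟨?_, ?_, ?_, ?_⟩
    · apply sSup_le_sSup_of_isCofinalFor
      rintro r ⟨μ, ν, hμ, hν, hne, hD0, hDt, rfl⟩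
      obtain ⟨h1, h2, h3, _⟩ := mainA hα hP hμ hν hD0 hDt
      exact ⟨_, ⟨μ, ν, hμ, hν, hne, h1, h2, rfl⟩, h3⟩
    · apply sSup_le
      rintro r ⟨μ, ν, hμ, hν, hne, hR0, hRt, rfl⟩
      obtain ⟨hD0, hDt⟩ := RtoD hα hμ hν hR0 hRt
      obtain ⟨h1, h2, _, h4⟩ := mainA hα hP hμ hν hD0 hDt
      have : RtalphaE α (vecMul μ P) (vecMul ν P) *
          ((((RtalphaE α μ ν).toReal)⁻¹ : ℝ) : EReal) ≤ 1 := h4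
      exact this
    · apply sSup_le_sSup_of_isCofinalFor
      rintro r ⟨M, L, hM, hL, hne, hD0, hDt, rfl⟩
      rw [bridgeD hπ] at hD0 hDt
      obtain ⟨h1, h2, h3, _⟩ := mainA hα hP' (liftMat_prob hπ hπ1 hM) (liftMat_prob hπ hπ1 hL)
        hD0 hDt
      refine ⟨_, ⟨M, L, hM, hL, hne, ?_, ?_, rfl⟩, ?_⟩
      · rw [bridgeR hπ]; exact h1
      · rw [bridgeR hπ]; exact h2
      · rw [bridgeD hπ, bridgeD hπ, bridgeR hπ, bridgeR hπ, liftMat_vecMul, liftMat_vecMul]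
        exact h3
    · apply sSup_le
      rintro r ⟨M, L, hM, hL, hne, hR0, hRt, rfl⟩
      rw [bridgeR hπ] at hR0 hRt
      obtain ⟨hD0, hDt⟩ := RtoD hα (liftMat_prob hπ hπ1 hM) (liftMat_prob hπ hπ1 hL) hR0 hRt
      obtain ⟨_, _, _, h4⟩ := mainA hα hP' (liftMat_prob hπ hπ1 hM) (liftMat_prob hπ hπ1 hL)
        hD0 hDt
      rw [bridgeR hπ, bridgeR hπ, liftMat_vecMul, liftMat_vecMul]
      exact h4
  · intro β hβ
    obtain ⟨hβ0, hβ1⟩ := hβ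
    constructor
    · apply sSup_le_sSup_of_isCofinalFor
      rintro r ⟨μ, ν, hμ, hν, hne, hR0, hRt, rfl⟩
      obtain ⟨h1, h2, h3⟩ := mainB hβ0 hβ1 hP hμ hν hR0
      exact ⟨_, ⟨μ, ν, hμ, hν, hne, h1, h2, rfl⟩, h3⟩
    · apply sSup_le_sSup_of_isCofinalFor
      rintro r ⟨M, L, hM, hL, hne, hR0, hRt, rfl⟩
      rw [bridgeR hπ] at hR0
      obtain ⟨h1, h2, h3⟩ := mainB hβ0 hβ1 hP' (liftMat_prob hπ hπ1 hM)
        (liftMat_prob hπ hπ1 hL) hR0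
      refine ⟨_, ⟨M, L, hM, hL, hne, ?_, ?_, rfl⟩, ?_⟩
      · rw [bridgeD hπ]; exact h1
      · rw [bridgeD hπ]; exact h2
      · rw [bridgeD hπ, bridgeD hπ, bridgeR hπ, bridgeR hπ, liftMat_vecMul, liftMat_vecMul]
        exact h3
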